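/- Let π : R → S be a surjective homomorphism of commutative rings and let v be a pre-valuation on R with associated p-filtration (a_{v,n}). Then the function v_S : S → ℕ ∪ {∞} defined by v_S(z) = sup{ v(y) : y ∈ R, π(y) = z } is a pre-valuation on S, and its associated p-filtration is given by a_{v_S,n} = π(a_{v,n}) for all n ≥ 0. -/

import Mathlib

/-- A pre-valuation on a commutative ring `R`. -/
structure PreVal (R : Type*) [CommRing R] where
  v : R → ℕ∞
  map_zero : v 0 = ⊤
  mul_le : ∀ x y : R, v x + v y ≤ v (x * y)
  min_le_add : ∀ x y : R, min (v x) (v y) ≤ v (x + y)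
  add_eq : ∀ x y : R, v x ≠ v y → v (x + y) = min (v x) (v y)

/-- If `π : R → S` is a surjective ring homomorphism and `v` is a
pre-valuation on `R`, then `v_S(z) = sup { v y : π y = z }` is a pre-valuation on `S`
whose associated filtration is `a_{v_S,n} = π(a_{v,n})`. -/
theorem stmt5 {R S : Type*} [CommRing R] [CommRing S] (π : R →+* S)
    (hπ : Function.Surjective π) (v : PreVal R) :
    ∃ w : PreVal S,
      (∀ z : S, w.v z = sSup (v.v '' {y : R | π y = z})) ∧
      ∀ n : ℕ, {z : S | (n : ℕ∞) ≤ w.v z} = π '' {x : R | (n : ℕ∞) ≤ v.v x} := by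
  classical
  set A : S → Set ℕ∞ := fun z => v.v '' {y : R | π y = z} with hA
  have hne : ∀ z : S, (A z).Nonempty := by
    intro z; obtain ⟨x, hx⟩ := hπ z; exact ⟨v.v x, x, hx, rfl⟩
  have hle : ∀ x : R, v.v x ≤ sSup (A (π x)) := fun x => le_sSup ⟨x, rfl, rfl⟩
  -- map_zero
  have hmap0 : sSup (A 0) = ⊤ := by
    refine top_le_iff.mp ?_
    calc (⊤ : ℕ∞) = v.v 0 := v.map_zero.symm
      _ ≤ sSup (A (π 0)) := hle 0
      _ = sSup (A 0) := by rw [map_zero]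
  -- mul_le
  have hmul : ∀ z1 z2 : S, sSup (A z1) + sSup (A z2) ≤ sSup (A (z1 * z2)) := by
    intro z1 z2
    rw [ENat.sSup_add (hne z1)]
    refine iSup₂_le ?_
    rintro _ ⟨x, hx, rfl⟩
    rw [ENat.add_sSup (hne z2)]
    refine iSup₂_le ?_
    rintro _ ⟨y, hy, rfl⟩
    calc v.v x + v.v y ≤ v.v (x * y) := v.mul_le x y
      _ ≤ sSup (A (π (x * y))) := hle _
      _ = sSup (A (z1 * z2)) := by rw [map_mul, hx, hy]
  -- min_le_add
  have hmin : ∀ z1 z2 : S, min (sSup (A z1)) (sSup (A z2)) ≤ sSup (A (z1 + z2)) := by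
    intro z1 z2
    have : sSup (A z1) ⊓ sSup (A z2) = ⨆ p ∈ (A z1) ×ˢ (A z2), (p : ℕ∞ × ℕ∞).1 ⊓ p.2 :=
      sSup_inf_sSup
    change min (sSup (A z1)) (sSup (A z2)) = _ at this
    rw [this]
    refine iSup₂_le ?_
    rintro ⟨a, b⟩ ⟨⟨x, hx, rfl⟩, ⟨y, hy, rfl⟩⟩
    calc v.v x ⊓ v.v y ≤ v.v (x + y) := v.min_le_add x y
      _ ≤ sSup (A (π (x + y))) := hle _
      _ = sSup (A (z1 + z2)) := by rw [map_add, hx, hy]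
  -- key lemma for add_eq
  have hkey : ∀ z1 z2 : S, sSup (A z1) < sSup (A z2) → sSup (A (z1 + z2)) ≤ sSup (A z1) := by
    intro z1 z2 h
    refine sSup_le ?_
    rintro _ ⟨y, hy, rfl⟩
    obtain ⟨_, ⟨x2, hx2, rfl⟩, hlt⟩ := lt_sSup_iff.mp h
    have h1 : π (y - x2) = z1 := by
      rw [map_sub, hy, hx2]; ring
    have h2 : v.v (y - x2) ≤ sSup (A z1) := le_sSup ⟨y - x2, h1, rfl⟩
    have h3 : v.v (y - x2) ≠ v.v x2 := (h2.trans_lt hlt).ne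
    have h4 := v.add_eq (y - x2) x2 h3
    rw [sub_add_cancel] at h4
    rw [h4]
    exact le_trans (min_le_left _ _) h2
  have hadd : ∀ z1 z2 : S, sSup (A z1) ≠ sSup (A z2) →
      sSup (A (z1 + z2)) = min (sSup (A z1)) (sSup (A z2)) := by
    intro z1 z2 hne'
    rcases hne'.lt_or_gt with h | h
    · rw [min_eq_left h.le]
      exact le_antisymm (hkey z1 z2 h) (le_trans (by rw [min_eq_left h.le]) (hmin z1 z2))
    · rw [min_eq_right h.le, add_comm z1 z2]
      exact le_antisymm (hkey z2 z1 h) (le_trans (by rw [min_eq_left h.le]) (hmin z2 z1))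
  refine ⟨⟨fun z => sSup (A z), hmap0, hmul, hmin, hadd⟩, fun z => rfl, ?_⟩
  intro n
  ext z
  simp only [Set.mem_setOf_eq, Set.mem_image]
  constructor
  · intro hn
    cases n with
    | zero =>
      obtain ⟨x, hx⟩ := hπ z
      exact ⟨x, by simp, hx⟩
    | succ m =>
      have hm : (m : ℕ∞) < sSup (A z) :=
        lt_of_lt_of_le (by exact_mod_cast Nat.lt_succ_self m) hn
      obtain ⟨_, ⟨x, hx, rfl⟩, hlt⟩ := lt_sSup_iff.mp hm
      refine ⟨x, ?_, hx⟩
      have : (m : ℕ∞) + 1 ≤ v.v x := (ENat.add_one_le_iff (by simp)).mpr hlt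
      simpa [Nat.cast_succ] using this
  · rintro ⟨x, hx1, hx2⟩
    exact hx2 ▸ le_trans hx1 (hle x)
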